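/- Let {p_i} and {n_i} be sequences of points in Ω with Σ_{i=1}^∞ |p_i − n_i| < ∞. Then for every Lipschitz function u : Ω → ℝ the series Σ_{i=1}^∞ (u(p_i) − u(n_i)) converges absolutely, and for every ε > 0 there exists C_ε > 0 such that |Σ_{i=1}^∞ (u(p_i) − u(n_i))| ≤ C_ε ‖u‖_{L∞(Ω)} + ε·Lip(u) for all Lipschitz u : Ω → ℝ, where Lip(u) denotes the Lipschitz constant of u. In particular the distribution T defined by ⟨T,φ⟩ := Σ_{i=1}^∞ (φ(p_i) − φ(n_i)) for φ ∈ C¹_c(ℝ^N) belongs to X₀^♯(Ω). -/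

import Mathlib

set_option maxHeartbeats 1000000

open MeasureTheory Filter Topology
open scoped NNReal RealInnerProductSpace

noncomputable section

/-- Euclidean space `ℝ^N`. -/
abbrev Euc (N : ℕ) := EuclideanSpace ℝ (Fin N)

/-- Test functions: `C¹` functions with compact support on `ℝ^N`. -/
def IsTest {N : ℕ} (φ : Euc N → ℝ) : Prop :=
  ContDiff ℝ 1 φ ∧ HasCompactSupport φ

/-- `L^∞(Ω)`-type supremum of a function over the set `Ω`. -/
def supOn {N : ℕ} (Ω : Set (Euc N)) (g : Euc N → ℝ) : ℝ := sSup (g '' Ω)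

/-- `f ∈ X₀(Ω)`: distributions of order one with zero average, supported in `Ω`. -/
def MemX0 {N : ℕ} (Ω : Set (Euc N)) (f : (Euc N → ℝ) →ₗ[ℝ] ℝ) : Prop :=
  (∃ C : ℝ, 0 ≤ C ∧ ∀ φ : Euc N → ℝ, IsTest φ →
      |f φ| ≤ C * (supOn Ω (fun x => |φ x|) + supOn Ω (fun x => ‖gradient φ x‖))) ∧
  ∀ φ : Euc N → ℝ, IsTest φ → (∃ c : ℝ, ∀ x ∈ Ω, φ x = c) → f φ = 0

/-- `f ∈ X₀^♯(Ω)`. -/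
def MemX0sharp {N : ℕ} (Ω : Set (Euc N)) (f : (Euc N → ℝ) →ₗ[ℝ] ℝ) : Prop :=
  MemX0 Ω f ∧ ∀ ε : ℝ, 0 < ε → ∃ C : ℝ, 0 < C ∧ ∀ φ : Euc N → ℝ, IsTest φ →
    |f φ| ≤ C * supOn Ω (fun x => |φ x|) + ε * supOn Ω (fun x => ‖gradient φ x‖)

/-- The Wasserstein norm `W¹(f)`. -/
def W1 {N : ℕ} (f : (Euc N → ℝ) →ₗ[ℝ] ℝ) : ℝ :=
  sSup {r : ℝ | ∃ φ : Euc N → ℝ, IsTest φ ∧ (∀ x, ‖gradient φ x‖ ≤ 1) ∧ r = f φ}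

/-- The submodule of functions `u` with `∑ (u(p_i) - u(n_i))` summable. -/
def Smod {N : ℕ} (p n : ℕ → Euc N) : Submodule ℝ (Euc N → ℝ) where
  carrier := {u | Summable fun i => u (p i) - u (n i)}
  add_mem' := by
    intro a b ha hb
    have h := ha.add hb
    simpa [add_sub_add_comm] using h
  zero_mem' := by
    simpa using summable_zero
  smul_mem' := by
    intro c a ha
    have h := ha.mul_left c
    simpa [mul_sub, smul_eq_mul] using h

/-- The dipole functional on `Smod`. -/
def f0 {N : ℕ} (p n : ℕ → Euc N) : Smod p n →ₗ[ℝ] ℝ where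
  toFun u := ∑' i, (u.1 (p i) - u.1 (n i))
  map_add' u v := by
    have h : (fun i => ((u : Euc N → ℝ) + (v : Euc N → ℝ)) (p i)
        - ((u : Euc N → ℝ) + (v : Euc N → ℝ)) (n i))
        = fun i => ((u : Euc N → ℝ) (p i) - (u : Euc N → ℝ) (n i))
          + ((v : Euc N → ℝ) (p i) - (v : Euc N → ℝ) (n i)) := by
      funext i; simp [add_sub_add_comm]
    simp only [Submodule.coe_add, h]
    exact Summable.tsum_add u.2 v.2
  map_smul' c u := by
    have h : (fun i => (c • (u : Euc N → ℝ)) (p i) - (c • (u : Euc N → ℝ)) (n i))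
        = fun i => c * ((u : Euc N → ℝ) (p i) - (u : Euc N → ℝ) (n i)) := by
      funext i; simp [mul_sub]
    simp only [Submodule.coe_smul, h, tsum_mul_left]
    rfl

theorem statement12 {N : ℕ} (Ω : Set (Euc N)) (hΩconv : Convex ℝ Ω) (hΩcomp : IsCompact Ω)
    (p n : ℕ → Euc N) (hp : ∀ i, p i ∈ Ω) (hn : ∀ i, n i ∈ Ω)
    (hsum : Summable fun i => ‖p i - n i‖) :
    (∀ u : Euc N → ℝ, (∃ K : ℝ≥0, LipschitzOnWith K u Ω) →
      Summable fun i => |u (p i) - u (n i)|) ∧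
    (∀ ε : ℝ, 0 < ε → ∃ C : ℝ, 0 < C ∧ ∀ (u : Euc N → ℝ) (K : ℝ≥0),
      LipschitzOnWith K u Ω →
      |∑' i, (u (p i) - u (n i))| ≤ C * supOn Ω (fun x => |u x|) + ε * K) ∧
    ∃ T : (Euc N → ℝ) →ₗ[ℝ] ℝ,
      (∀ φ : Euc N → ℝ, IsTest φ → T φ = ∑' i, (φ (p i) - φ (n i))) ∧
      MemX0sharp Ω T := by
  -- basic facts
  have hdiff : ∀ (u : Euc N → ℝ) (K : ℝ≥0), LipschitzOnWith K u Ω →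
      ∀ i, |u (p i) - u (n i)| ≤ (K : ℝ) * ‖p i - n i‖ := by
    intro u K hu i
    have h := hu.dist_le_mul (p i) (hp i) (n i) (hn i)
    rw [Real.dist_eq, dist_eq_norm] at h
    exact h
  have habs : ∀ (u : Euc N → ℝ) (K : ℝ≥0), LipschitzOnWith K u Ω →
      Summable fun i => |u (p i) - u (n i)| := fun u K hu =>
    Summable.of_nonneg_of_le (fun i => abs_nonneg _) (hdiff u K hu) (hsum.mul_left (K : ℝ))
  have hsummable : ∀ (u : Euc N → ℝ) (K : ℝ≥0), LipschitzOnWith K u Ω →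
      Summable fun i => u (p i) - u (n i) := fun u K hu => (habs u K hu).of_abs
  -- sup bounds
  have hsupb : ∀ (u : Euc N → ℝ), ContinuousOn u Ω →
      ∀ x ∈ Ω, |u x| ≤ supOn Ω (fun x => |u x|) := by
    intro u hu x hx
    have hbdd : BddAbove ((fun x => |u x|) '' Ω) := hΩcomp.bddAbove_image hu.abs
    exact le_csSup hbdd ⟨x, hx, rfl⟩
  have hsupnn : ∀ (u : Euc N → ℝ), ContinuousOn u Ω →
      0 ≤ supOn Ω (fun x => |u x|) := fun u hu =>
    le_trans (abs_nonneg _) (hsupb u hu _ (hp 0))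
  -- key estimate
  have key : ∀ ε : ℝ, 0 < ε → ∃ C : ℝ, 0 < C ∧ ∀ (u : Euc N → ℝ) (K : ℝ≥0),
      LipschitzOnWith K u Ω →
      |∑' i, (u (p i) - u (n i))| ≤ C * supOn Ω (fun x => |u x|) + ε * K := by
    intro ε hε
    obtain ⟨M, hM⟩ : ∃ M : ℕ, ∑' k, ‖p (k + M) - n (k + M)‖ ≤ ε := by
      have ht := tendsto_sum_nat_add (fun i => ‖p i - n i‖)
      exact (ht.eventually_le_const hε).exists
    refine ⟨2 * M + 1, by positivity, ?_⟩
    intro u K hu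
    have hS := hsummable u K hu
    have hsplit := Summable.sum_add_tsum_nat_add (f := fun i => u (p i) - u (n i)) M hS
    have hsup := hsupb u hu.continuousOn
    have hsupnn' := hsupnn u hu.continuousOn
    have hfin : |∑ i ∈ Finset.range M, (u (p i) - u (n i))|
        ≤ (2 * M) * supOn Ω (fun x => |u x|) := by
      calc |∑ i ∈ Finset.range M, (u (p i) - u (n i))|
          ≤ ∑ i ∈ Finset.range M, |u (p i) - u (n i)| := Finset.abs_sum_le_sum_abs _ _
        _ ≤ ∑ _i ∈ Finset.range M, 2 * supOn Ω (fun x => |u x|) := by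
            refine Finset.sum_le_sum fun i _ => ?_
            calc |u (p i) - u (n i)| ≤ |u (p i)| + |u (n i)| := abs_sub _ _
              _ ≤ 2 * supOn Ω (fun x => |u x|) := by
                  have h1 := hsup _ (hp i); have h2 := hsup _ (hn i); linarith
        _ = (2 * M) * supOn Ω (fun x => |u x|) := by
            rw [Finset.sum_const, Finset.card_range]; ring
    have htailS : Summable fun i => u (p (i + M)) - u (n (i + M)) :=
      (summable_nat_add_iff M).2 hS
    have htailabs : Summable fun i => |u (p (i + M)) - u (n (i + M))| :=
      (summable_nat_add_iff M).2 (habs u K hu)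
    have htailnorm : Summable fun i => (K : ℝ) * ‖p (i + M) - n (i + M)‖ :=
      (summable_nat_add_iff M).2 (hsum.mul_left (K : ℝ))
    have htail : |∑' i, (u (p (i + M)) - u (n (i + M)))| ≤ ε * (K : ℝ) := by
      calc |∑' i, (u (p (i + M)) - u (n (i + M)))|
          ≤ ∑' i, |u (p (i + M)) - u (n (i + M))| := by
            have h := norm_tsum_le_tsum_norm (f := fun i => u (p (i + M)) - u (n (i + M)))
              (by simpa only [Real.norm_eq_abs] using htailabs)
            simpa only [Real.norm_eq_abs] using h
        _ ≤ ∑' i, (K : ℝ) * ‖p (i + M) - n (i + M)‖ :=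
            Summable.tsum_le_tsum (fun i => hdiff u K hu _) htailabs htailnorm
        _ = (K : ℝ) * ∑' i, ‖p (i + M) - n (i + M)‖ := tsum_mul_left
        _ ≤ (K : ℝ) * ε := mul_le_mul_of_nonneg_left hM K.coe_nonneg
        _ = ε * (K : ℝ) := mul_comm _ _
    calc |∑' i, (u (p i) - u (n i))|
        = |(∑ i ∈ Finset.range M, (u (p i) - u (n i)))
            + ∑' i, (u (p (i + M)) - u (n (i + M)))| := by rw [hsplit]
      _ ≤ |∑ i ∈ Finset.range M, (u (p i) - u (n i))|
            + |∑' i, (u (p (i + M)) - u (n (i + M)))| := abs_add_le _ _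
      _ ≤ (2 * M) * supOn Ω (fun x => |u x|) + ε * (K : ℝ) := add_le_add hfin htail
      _ ≤ (2 * M + 1) * supOn Ω (fun x => |u x|) + ε * (K : ℝ) := by nlinarith
  -- gradient facts for test functions
  have hgradnorm : ∀ (φ : Euc N → ℝ) (x : Euc N), ‖gradient φ x‖ = ‖fderiv ℝ φ x‖ := by
    intro φ x
    exact (InnerProductSpace.toDual ℝ (Euc N)).symm.norm_map _
  have hgradsup : ∀ φ : Euc N → ℝ, IsTest φ →
      ∀ x ∈ Ω, ‖fderiv ℝ φ x‖ ≤ supOn Ω (fun x => ‖gradient φ x‖) := by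
    intro φ hφ x hx
    have hc : Continuous fun x => ‖gradient φ x‖ := by
      have h1 : Continuous (fderiv ℝ φ) := hφ.1.continuous_fderiv one_ne_zero
      exact ((InnerProductSpace.toDual ℝ (Euc N)).symm.continuous.comp h1).norm
    have hbdd : BddAbove ((fun x => ‖gradient φ x‖) '' Ω) :=
      hΩcomp.bddAbove_image hc.continuousOn
    rw [← hgradnorm φ x]
    exact le_csSup hbdd ⟨x, hx, rfl⟩
  have hgradsupnn : ∀ φ : Euc N → ℝ, IsTest φ →
      0 ≤ supOn Ω (fun x => ‖gradient φ x‖) := by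
    intro φ hφ
    exact le_trans (norm_nonneg _) (by rw [hgradnorm]; exact hgradsup φ hφ _ (hp 0))
  have hlip : ∀ φ : Euc N → ℝ, IsTest φ →
      LipschitzOnWith (Real.toNNReal (supOn Ω (fun x => ‖gradient φ x‖))) φ Ω := by
    intro φ hφ
    refine Convex.lipschitzOnWith_of_nnnorm_fderiv_le
      (fun x _ => (hφ.1.differentiable one_ne_zero).differentiableAt) (fun x hx => ?_) hΩconv
    rw [← NNReal.coe_le_coe, coe_nnnorm, Real.coe_toNNReal _ (hgradsupnn φ hφ)]
    exact hgradsup φ hφ x hx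
  have hcoeK : ∀ φ : Euc N → ℝ, IsTest φ →
      ((Real.toNNReal (supOn Ω (fun x => ‖gradient φ x‖)) : ℝ≥0) : ℝ)
        = supOn Ω (fun x => ‖gradient φ x‖) := fun φ hφ =>
    Real.coe_toNNReal _ (hgradsupnn φ hφ)
  -- the linear functional T
  obtain ⟨T, hT⟩ := LinearMap.exists_extend (f0 p n)
  have hTval : ∀ (u : Euc N → ℝ) (hu : Summable fun i => u (p i) - u (n i)),
      T u = ∑' i, (u (p i) - u (n i)) := by
    intro u hu
    exact LinearMap.congr_fun hT (⟨u, hu⟩ : Smod p n)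
  have hTtest : ∀ φ : Euc N → ℝ, IsTest φ → T φ = ∑' i, (φ (p i) - φ (n i)) := by
    intro φ hφ
    exact hTval φ (hsummable φ _ (hlip φ hφ))
  refine ⟨fun u ⟨K, hu⟩ => habs u K hu, key, T, hTtest, ?_, ?_⟩
  · constructor
    · -- order one bound
      obtain ⟨C, hC0, hC⟩ := key 1 one_pos
      refine ⟨max C 1, le_trans hC0.le (le_max_left _ _), ?_⟩
      intro φ hφ
      rw [hTtest φ hφ]
      have h := hC φ _ (hlip φ hφ)
      rw [hcoeK φ hφ] at h
      have hs1 : 0 ≤ supOn Ω (fun x => |φ x|) := hsupnn φ hφ.1.continuous.continuousOn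
      have hs2 : 0 ≤ supOn Ω (fun x => ‖gradient φ x‖) := hgradsupnn φ hφ
      have h1 : C * supOn Ω (fun x => |φ x|) ≤ max C 1 * supOn Ω (fun x => |φ x|) :=
        mul_le_mul_of_nonneg_right (le_max_left _ _) hs1
      have h2 : 1 * supOn Ω (fun x => ‖gradient φ x‖)
          ≤ max C 1 * supOn Ω (fun x => ‖gradient φ x‖) :=
        mul_le_mul_of_nonneg_right (le_max_right _ _) hs2
      calc |∑' i, (φ (p i) - φ (n i))|
          ≤ C * supOn Ω (fun x => |φ x|) + 1 * supOn Ω (fun x => ‖gradient φ x‖) := h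
        _ ≤ max C 1 * supOn Ω (fun x => |φ x|)
            + max C 1 * supOn Ω (fun x => ‖gradient φ x‖) := add_le_add h1 h2
        _ = max C 1 * (supOn Ω (fun x => |φ x|)
            + supOn Ω (fun x => ‖gradient φ x‖)) := by ring
    · -- zero on constants
      intro φ hφ ⟨c, hc⟩
      have hz : (fun i => φ (p i) - φ (n i)) = fun _ => (0 : ℝ) := by
        funext i; rw [hc _ (hp i), hc _ (hn i)]; ring
      rw [hTval φ (by rw [hz]; exact summable_zero), hz, tsum_zero]
  · -- sharp estimate
    intro ε hε
    obtain ⟨C, hC0, hC⟩ := key ε hε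
    refine ⟨C, hC0, ?_⟩
    intro φ hφ
    rw [hTtest φ hφ]
    have h := hC φ _ (hlip φ hφ)
    rwa [hcoeK φ hφ] at h
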